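/- Let G be a simple graph on a finite vertex set of size m such that for every subset V' of vertices, the subgraph induced on V' has at most c·|V'| edges, where c > 0 is a real constant. Then for every integer k ≥ 2, the number of k-element vertex subsets of G that span a complete graph K_k is at most ((2c)^(k−1)/k!)·m. -/

import Mathlib

open Finset

section aux
variable {V : Type*} [Fintype V] [DecidableEq V] (G : SimpleGraph V) [DecidableRel G.Adj]

/-- The subgraph of `G` with both endpoints in `s`. -/
def restrictG (s : Finset V) : SimpleGraph V where
  Adj u v := G.Adj u v ∧ u ∈ s ∧ v ∈ s
  symm := ⟨fun u v ⟨h, hu, hv⟩ => ⟨h.symm, hv, hu⟩⟩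
  loopless := ⟨fun v h => G.irrefl h.1⟩

instance restrictG_decidable (s : Finset V) : DecidableRel (restrictG G s).Adj :=
  fun _ _ => instDecidableAnd

lemma restrictG_edgeFinset (s : Finset V) :
    (restrictG G s).edgeFinset = G.edgeFinset.filter (fun e => ∀ v ∈ e, v ∈ s) := by
  ext e
  induction e with
  | _ x y =>
    rw [SimpleGraph.mem_edgeFinset, SimpleGraph.mem_edgeSet]
    simp [SimpleGraph.mem_edgeFinset, SimpleGraph.mem_edgeSet, restrictG, Sym2.mem_iff]

lemma restrictG_neighborFinset (s : Finset V) (v : V) (hv : v ∈ s) :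
    (restrictG G s).neighborFinset v = s ∩ G.neighborFinset v := by
  ext u
  rw [SimpleGraph.mem_neighborFinset]
  simp [SimpleGraph.mem_neighborFinset, restrictG, hv]
  tauto

lemma restrictG_neighborFinset_empty (s : Finset V) (v : V) (hv : v ∉ s) :
    (restrictG G s).neighborFinset v = ∅ := by
  ext u
  rw [SimpleGraph.mem_neighborFinset]
  simp [SimpleGraph.mem_neighborFinset, restrictG]
  tauto

/-- Handshake within `s`. -/
lemma handshake (s : Finset V) :
    ∑ v ∈ s, (s ∩ G.neighborFinset v).card
      = 2 * (G.edgeFinset.filter (fun e => ∀ v ∈ e, v ∈ s)).card := by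
  rw [← restrictG_edgeFinset, ← SimpleGraph.sum_degrees_eq_twice_card_edges]
  rw [← Finset.sum_subset (Finset.subset_univ s)]
  · refine Finset.sum_congr rfl fun v hv => ?_
    rw [SimpleGraph.degree, restrictG_neighborFinset G s v hv]
  · intro v _ hv
    rw [SimpleGraph.degree, restrictG_neighborFinset_empty G s v hv, Finset.card_empty]

/-- Double counting: each (k+1)-clique in s is counted once per vertex. -/
lemma double_count (s : Finset V) (k : ℕ) :
    (k + 1) * ((G.cliqueFinset (k + 1)).filter (· ⊆ s)).card
      = ∑ v ∈ s, ((G.cliqueFinset k).filter (· ⊆ s ∩ G.neighborFinset v)).card := by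
  classical
  have h1 : (k + 1) * ((G.cliqueFinset (k + 1)).filter (· ⊆ s)).card
      = ∑ K ∈ (G.cliqueFinset (k + 1)).filter (· ⊆ s), K.card := by
    rw [Finset.sum_congr rfl (fun K hK => ?_), Finset.sum_const, smul_eq_mul, mul_comm]
    have := (SimpleGraph.mem_cliqueFinset_iff.mp (Finset.mem_filter.mp hK).1).2
    exact this
  rw [h1]
  have h2 : ∀ K ∈ (G.cliqueFinset (k + 1)).filter (· ⊆ s),
      K.card = ∑ v ∈ s, (if v ∈ K then 1 else 0) := by
    intro K hK
    have hKs : K ⊆ s := (Finset.mem_filter.mp hK).2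
    rw [Finset.sum_ite_mem, Finset.sum_const, smul_eq_mul, mul_one,
      Finset.inter_eq_right.mpr hKs]
  rw [Finset.sum_congr rfl h2, Finset.sum_comm]
  refine Finset.sum_congr rfl fun v hv => ?_
  rw [show (∑ x ∈ (G.cliqueFinset (k + 1)).filter (· ⊆ s), if v ∈ x then 1 else 0)
      = (((G.cliqueFinset (k + 1)).filter (· ⊆ s)).filter (fun x => v ∈ x)).card from
      (Finset.card_filter _ _).symm]
  refine Finset.card_bij' (fun K _ => K.erase v) (fun K _ => insert v K) ?_ ?_ ?_ ?_
  · intro K hK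
    simp only [Finset.mem_filter, SimpleGraph.mem_cliqueFinset_iff] at hK ⊢
    obtain ⟨⟨hKcl, hKs⟩, hvK⟩ := hK
    refine ⟨⟨hKcl.1.subset (Finset.erase_subset v K), ?_⟩, ?_⟩
    · rw [Finset.card_erase_of_mem hvK, hKcl.2]; rfl
    · intro u hu
      obtain ⟨huv, huK⟩ := Finset.mem_erase.mp hu
      exact Finset.mem_inter.mpr ⟨hKs huK, (SimpleGraph.mem_neighborFinset _ _ _).mpr
        ((hKcl.1 hvK huK (Ne.symm huv)))⟩
  · intro K hK
    simp only [Finset.mem_filter, SimpleGraph.mem_cliqueFinset_iff] at hK ⊢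
    obtain ⟨hKcl, hKsub⟩ := hK
    have hvnK : v ∉ K := by
      intro h
      have := Finset.mem_inter.mp (hKsub h)
      exact G.irrefl ((SimpleGraph.mem_neighborFinset _ _ _).mp this.2)
    have hadj : ∀ b ∈ K, G.Adj v b := fun b hb =>
      (SimpleGraph.mem_neighborFinset _ _ _).mp (Finset.mem_inter.mp (hKsub hb)).2
    refine ⟨⟨hKcl.insert hadj, fun u hu => ?_⟩, Finset.mem_insert_self v K⟩
    rcases Finset.mem_insert.mp hu with rfl | hu
    · exact hv
    · exact (Finset.mem_inter.mp (hKsub hu)).1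
  · intro K hK
    exact Finset.insert_erase (Finset.mem_filter.mp hK).2
  · intro K hK
    refine Finset.erase_insert ?_
    intro h
    have := Finset.mem_inter.mp ((Finset.mem_filter.mp hK).2 h)
    exact G.irrefl ((SimpleGraph.mem_neighborFinset _ _ _).mp this.2)


lemma clique_bound (c : ℝ) (hc : 0 < c)
    (hsparse : ∀ V' : Finset V,
      ((G.edgeFinset.filter fun e => ∀ v ∈ e, v ∈ V').card : ℝ) ≤ c * V'.card) :
    ∀ k : ℕ, 1 ≤ k → ∀ s : Finset V,
      ((((G.cliqueFinset k).filter (· ⊆ s)).card : ℝ))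
        ≤ (2 * c) ^ (k - 1) / (Nat.factorial k) * s.card := by
  intro k hk
  induction k, hk using Nat.le_induction with
  | base =>
    intro s
    norm_num
    have hsub : (G.cliqueFinset 1).filter (· ⊆ s) ⊆ s.image singleton := by
      intro K hK
      obtain ⟨hK1, hKs⟩ := Finset.mem_filter.mp hK
      obtain ⟨a, rfl⟩ := SimpleGraph.isNClique_one.mp
        (SimpleGraph.mem_cliqueFinset_iff.mp hK1)
      exact Finset.mem_image.mpr ⟨a, hKs (Finset.mem_singleton_self a), rfl⟩
    exact (Finset.card_le_card hsub).trans Finset.card_image_le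
  | succ n hn IH =>
    intro s
    have hdc := double_count G s n
    have hfac0 : ((n.factorial : ℝ)) ≠ 0 := by positivity
    have hpos : (0 : ℝ) < (n : ℝ) + 1 := by positivity
    -- cast double counting to ℝ
    have hdcR : ((n : ℝ) + 1) * (((G.cliqueFinset (n + 1)).filter (· ⊆ s)).card : ℝ)
        = ∑ v ∈ s, (((G.cliqueFinset n).filter (· ⊆ s ∩ G.neighborFinset v)).card : ℝ) := by
      exact_mod_cast congrArg (Nat.cast : ℕ → ℝ) hdc
    have hstep : ∑ v ∈ s, (((G.cliqueFinset n).filter (· ⊆ s ∩ G.neighborFinset v)).card : ℝ)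
        ≤ (2 * c) ^ (n - 1) / (Nat.factorial n) * (2 * (c * s.card)) := by
      calc ∑ v ∈ s, (((G.cliqueFinset n).filter (· ⊆ s ∩ G.neighborFinset v)).card : ℝ)
          ≤ ∑ v ∈ s, (2 * c) ^ (n - 1) / (Nat.factorial n) * ((s ∩ G.neighborFinset v).card : ℝ) :=
            Finset.sum_le_sum fun v _ => IH _
        _ = (2 * c) ^ (n - 1) / (Nat.factorial n)
            * ∑ v ∈ s, ((s ∩ G.neighborFinset v).card : ℝ) := by
            rw [Finset.mul_sum]
        _ ≤ (2 * c) ^ (n - 1) / (Nat.factorial n) * (2 * (c * s.card)) := by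
            refine mul_le_mul_of_nonneg_left ?_ (by positivity)
            have hhs : (∑ v ∈ s, ((s ∩ G.neighborFinset v).card : ℝ))
                = 2 * ((G.edgeFinset.filter (fun e => ∀ v ∈ e, v ∈ s)).card : ℝ) := by
              exact_mod_cast congrArg (Nat.cast : ℕ → ℝ) (handshake G s)
            rw [hhs]
            have := hsparse s
            linarith
    have key : ((n : ℝ) + 1) * (((G.cliqueFinset (n + 1)).filter (· ⊆ s)).card : ℝ)
        ≤ ((n : ℝ) + 1) * ((2 * c) ^ (n + 1 - 1) / (Nat.factorial (n + 1)) * s.card) := by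
      rw [hdcR]
      refine hstep.trans (le_of_eq ?_)
      have hpow : (2 * c) ^ (n - 1) * (2 * c) = (2 * c) ^ (n + 1 - 1) := by
        rw [← pow_succ, Nat.sub_add_cancel hn]
        norm_num
      have hfac : ((Nat.factorial (n + 1) : ℝ)) = ((n : ℝ) + 1) * (Nat.factorial n) := by
        rw [Nat.factorial_succ]; push_cast; ring
      rw [hfac, ← hpow]
      field_simp
    exact le_of_mul_le_mul_left key hpos

end aux

/-- If every induced subgraph of `G` on a vertex subset `V'` has at most `c·|V'|` edges,
then the number of `k`-cliques of `G` is at most `((2c)^(k-1)/k!)·m`. -/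
theorem stmt_1 {V : Type*} [Fintype V] [DecidableEq V]
    (G : SimpleGraph V) [DecidableRel G.Adj]
    (m : ℕ) (hm : Fintype.card V = m) (c : ℝ) (hc : 0 < c)
    (hsparse : ∀ V' : Finset V,
      ((G.edgeFinset.filter fun e => ∀ v ∈ e, v ∈ V').card : ℝ) ≤ c * V'.card)
    (k : ℕ) (hk : 2 ≤ k) :
    ((G.cliqueFinset k).card : ℝ) ≤ (2 * c) ^ (k - 1) / (Nat.factorial k) * m := by
  have h := clique_bound G c hc hsparse k (le_trans one_le_two hk) Finset.univ
  rw [Finset.filter_true_of_mem (fun K _ => Finset.subset_univ K)] at h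
  rwa [Finset.card_univ, hm] at h
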